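/- Let (G, k) be a reduced yes-instance of the diamond-free editing problem and let (E+, E−) be a solution of (G, k). For every pair of vertices u, v with uv ∈ E+ ∪ E−, the set N(u) ∩ N(v) has at most 3k vertices. -/

import Mathlib

variable {V : Type*}

/-- An induced diamond on vertices `u v x y`: all five edges present except `xy`;
`uv` is the cross edge and `xy` the missing edge. -/
def IsDiamond (G : SimpleGraph V) (u v x y : V) : Prop :=
  u ≠ v ∧ u ≠ x ∧ u ≠ y ∧ v ≠ x ∧ v ≠ y ∧ x ≠ y ∧
  G.Adj u v ∧ G.Adj u x ∧ G.Adj u y ∧ G.Adj v x ∧ G.Adj v y ∧ ¬ G.Adj x y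

def DiamondFree (G : SimpleGraph V) : Prop :=
  ∀ u v x y : V, ¬ IsDiamond G u v x y

/-- The graph `G △ E±` obtained from `G` by adding the edges of `Ep` and
deleting the edges of `Em`. -/
def EditedGraph (G : SimpleGraph V) (Ep Em : Finset (Sym2 V)) : SimpleGraph V :=
  SimpleGraph.fromEdgeSet ((G.edgeSet ∪ ↑Ep) \ ↑Em)

/-- `(Ep, Em)` is a solution of the instance `(G, k)` of diamond-free editing:
`Ep` is a set of non-edges of `G`, `Em` a set of edges of `G`,
`|Ep| + |Em| ≤ k`, and the edited graph is diamond-free. -/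
def IsSolution (G : SimpleGraph V) (k : ℕ) (Ep Em : Finset (Sym2 V)) : Prop :=
  (∀ e ∈ Ep, e ∉ G.edgeSet ∧ ¬ e.IsDiag) ∧
  (∀ e ∈ Em, e ∈ G.edgeSet) ∧
  Ep.card + Em.card ≤ k ∧
  DiamondFree (EditedGraph G Ep Em)

def YesInstance (G : SimpleGraph V) (k : ℕ) : Prop :=
  ∃ Ep Em : Finset (Sym2 V), IsSolution G k Ep Em

/-- A minimum solution: a solution such that no valid edit set of strictly
smaller total size makes the graph diamond-free. -/
def IsMinSolution (G : SimpleGraph V) (k : ℕ) (Ep Em : Finset (Sym2 V)) : Prop :=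
  IsSolution G k Ep Em ∧
  ∀ Ep' Em' : Finset (Sym2 V),
    (∀ e ∈ Ep', e ∉ G.edgeSet ∧ ¬ e.IsDiag) →
    (∀ e ∈ Em', e ∈ G.edgeSet) →
    DiamondFree (EditedGraph G Ep' Em') →
    Ep.card + Em.card ≤ Ep'.card + Em'.card

/-- There are `2k+2` distinct vertices `x 0, y 0, …, x k, y k` in
`N(u) ∩ N(v)` with each `x i y i` an edge of `G`. -/
def EdgePairedWitness (G : SimpleGraph V) (k : ℕ) (u v : V) : Prop :=
  ∃ x y : Fin (k + 1) → V,
    Function.Injective (Sum.elim x y) ∧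
    (∀ i, G.Adj u (x i) ∧ G.Adj v (x i) ∧ G.Adj u (y i) ∧ G.Adj v (y i)) ∧
    (∀ i, G.Adj (x i) (y i))

/-- There are `2k+2` distinct vertices `x 0, y 0, …, x k, y k` in
`N(u) ∩ N(v)` with each `x i y i` a non-edge of `G`. -/
def NonEdgePairedWitness (G : SimpleGraph V) (k : ℕ) (u v : V) : Prop :=
  ∃ x y : Fin (k + 1) → V,
    Function.Injective (Sum.elim x y) ∧
    (∀ i, G.Adj u (x i) ∧ G.Adj v (x i) ∧ G.Adj u (y i) ∧ G.Adj v (y i)) ∧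
    (∀ i, ¬ G.Adj (x i) (y i))

/-- The instance `(G, k)` is reduced: neither sunflower rule applies. -/
def Reduced (G : SimpleGraph V) (k : ℕ) : Prop :=
  (∀ u v : V, u ≠ v → ¬ G.Adj u v → ¬ EdgePairedWitness G k u v) ∧
  (∀ u v : V, G.Adj u v → ¬ NonEdgePairedWitness G k u v)

/-- `K` is a maximal clique of `G`. -/
def IsMaxClique (G : SimpleGraph V) (K : Finset V) : Prop :=
  G.IsClique (↑K : Set V) ∧
  ∀ K' : Finset V, G.IsClique (↑K' : Set V) → K ⊆ K' → K = K'

/-- `K` is a type-I maximal clique: it shares at least two vertices with some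
other maximal clique. -/
def TypeI [DecidableEq V] (G : SimpleGraph V) (K : Finset V) : Prop :=
  IsMaxClique G K ∧
  ∃ K' : Finset V, IsMaxClique G K' ∧ K' ≠ K ∧ 2 ≤ (K ∩ K').card

/-- `K` is a type-II maximal clique: it shares at most one vertex with every
other maximal clique. -/
def TypeII [DecidableEq V] (G : SimpleGraph V) (K : Finset V) : Prop :=
  IsMaxClique G K ∧
  ∀ K' : Finset V, IsMaxClique G K' → K' ≠ K → (K ∩ K').card ≤ 1

/-- A small (fewer than `3k+2` vertices) type-I maximal clique. -/
def SmallTypeI [DecidableEq V] (G : SimpleGraph V) (k : ℕ) (K : Finset V) : Prop :=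
  TypeI G K ∧ K.card < 3 * k + 2

/-- `S(G)`: the union of all small type-I maximal cliques of `G`. -/
def SG [DecidableEq V] (G : SimpleGraph V) (k : ℕ) : Set V :=
  {v | ∃ K : Finset V, SmallTypeI G k K ∧ v ∈ K}

/-- A vulnerable vertex: it is in a small type-I maximal clique, or in a
type-II maximal clique intersecting a small type-I maximal clique. -/
def Vulnerable [DecidableEq V] (G : SimpleGraph V) (k : ℕ) (v : V) : Prop :=
  (∃ K : Finset V, SmallTypeI G k K ∧ v ∈ K) ∨
  (∃ K1 K2 : Finset V, SmallTypeI G k K1 ∧ TypeII G K2 ∧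
    (K1 ∩ K2).Nonempty ∧ v ∈ K2)

lemma sum_elim_inj' {α γ : Type*} {f g : α → γ}
    (h : Function.Injective (Sum.elim f g)) :
    Function.Injective f ∧ Function.Injective g ∧ ∀ i j, f i ≠ g j := by
  refine ⟨fun i j hij => ?_, fun i j hij => ?_, fun i j hij => ?_⟩
  · have := @h (Sum.inl i) (Sum.inl j) (by simpa using hij)
    simpa using this
  · have := @h (Sum.inr i) (Sum.inr j) (by simpa using hij)
    simpa using this
  · have := @h (Sum.inl i) (Sum.inr j) (by simpa using hij)
    simp at this

lemma matching_or_free (R : V → V → Prop) :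
    ∀ (n : ℕ) (W : Finset V),
    (¬ ∃ x y : Fin (n + 1) → V, Function.Injective (Sum.elim x y) ∧
       (∀ i, x i ∈ W ∧ y i ∈ W) ∧ (∀ i, R (x i) (y i))) →
    ∃ I, I ⊆ W ∧ (∀ a ∈ I, ∀ b ∈ I, a ≠ b → ¬ R a b) ∧ W.card ≤ I.card + 2 * n := by
  classical
  intro n
  induction n with
  | zero =>
    intro W h
    refine ⟨W, Finset.Subset.refl W, fun a ha b hb hab hR => ?_, by omega⟩
    refine h ⟨fun _ => a, fun _ => b, ?_, fun _ => ⟨ha, hb⟩, fun _ => hR⟩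
    have hfin : ∀ (i j : Fin (0 + 1)), i = j := fun i j => Fin.ext (by omega)
    intro s t hst
    rcases s with i | i <;> rcases t with j | j <;>
        simp only [Sum.elim_inl, Sum.elim_inr] at hst
    · exact congrArg Sum.inl (hfin i j)
    · exact absurd hst hab
    · exact absurd hst.symm hab
    · exact congrArg Sum.inr (hfin i j)
  | succ n ih =>
    intro W h
    by_cases hfree : ∀ a ∈ W, ∀ b ∈ W, a ≠ b → ¬ R a b
    · exact ⟨W, Finset.Subset.refl W, hfree, by omega⟩
    · push_neg at hfree
      obtain ⟨a, ha, b, hb, hab, hR⟩ := hfree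
      set W' := (W.erase a).erase b with hW'
      have hW'mem : ∀ x ∈ W', x ∈ W ∧ x ≠ a ∧ x ≠ b := by
        intro x hx
        rw [hW', Finset.mem_erase, Finset.mem_erase] at hx
        exact ⟨hx.2.2, hx.2.1, hx.1⟩
      have h' : ¬ ∃ x y : Fin (n + 1) → V, Function.Injective (Sum.elim x y) ∧
          (∀ i, x i ∈ W' ∧ y i ∈ W') ∧ (∀ i, R (x i) (y i)) := by
        rintro ⟨x, y, hinj, hmem, hRm⟩
        obtain ⟨hxinj, hyinj, hxy⟩ := sum_elim_inj' hinj
        have hxa : ∀ i, x i ≠ a := fun i => (hW'mem _ (hmem i).1).2.1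
        have hxb : ∀ i, x i ≠ b := fun i => (hW'mem _ (hmem i).1).2.2
        have hya : ∀ i, y i ≠ a := fun i => (hW'mem _ (hmem i).2).2.1
        have hyb : ∀ i, y i ≠ b := fun i => (hW'mem _ (hmem i).2).2.2
        refine h ⟨Fin.cons a x, Fin.cons b y, ?_, ?_, ?_⟩
        · refine Function.Injective.sumElim ?_ ?_ ?_
          · rw [Fin.cons_injective_iff]
            exact ⟨by rintro ⟨i, hi⟩; exact hxa i hi, hxinj⟩
          · rw [Fin.cons_injective_iff]
            exact ⟨by rintro ⟨i, hi⟩; exact hyb i hi, hyinj⟩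
          · intro i j
            refine Fin.cases ?_ (fun i' => ?_) i
            · refine Fin.cases ?_ (fun j' => ?_) j
              · simp only [Fin.cons_zero]; exact hab
              · simp only [Fin.cons_zero, Fin.cons_succ]
                exact fun hc => hya j' hc.symm
            · refine Fin.cases ?_ (fun j' => ?_) j
              · simp only [Fin.cons_zero, Fin.cons_succ]; exact hxb i'
              · simp only [Fin.cons_succ]; exact hxy i' j'
        · intro i
          refine Fin.cases ?_ (fun i' => ?_) i
          · exact ⟨by simpa using ha, by simpa using hb⟩
          · simpa using ⟨(hW'mem _ (hmem i').1).1, (hW'mem _ (hmem i').2).1⟩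
        · intro i
          refine Fin.cases (by simpa using hR) (fun i' => by simpa using hRm i') i
      obtain ⟨I, hIW', hfreeI, hc⟩ := ih W' h'
      have hsub : W' ⊆ W := fun x hx => (hW'mem x hx).1
      have hc2 : W.card ≤ W'.card + 2 := by
        have h1 : W.card - 1 ≤ (W.erase a).card := Finset.pred_card_le_card_erase
        have h2 : (W.erase a).card - 1 ≤ W'.card := Finset.pred_card_le_card_erase
        have h3 : 1 ≤ W.card := Finset.card_pos.mpr ⟨a, ha⟩
        omega
      exact ⟨I, hIW'.trans hsub, hfreeI, by omega⟩

lemma counting [DecidableEq V] (F : Finset (Sym2 V)) (I : Finset V) (u v : V)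
    (huv : u ≠ v)
    (hIu : ∀ x ∈ I, x ≠ u) (hIv : ∀ x ∈ I, x ≠ v)
    (hcard : F.card + 2 ≤ I.card)
    (hforce : ∀ x ∈ I, ∀ y ∈ I, x ≠ y → s(u, x) ∉ F → s(v, x) ∉ F →
       s(u, y) ∉ F → s(v, y) ∉ F → s(x, y) ∈ F) : False := by
  classical
  set D := I.filter (fun x => s(u, x) ∈ F ∨ s(v, x) ∈ F) with hD
  set F1 := F.filter (fun e => ∃ x ∈ I, e = s(u, x) ∨ e = s(v, x)) with hF1
  have hDF1 : D.card ≤ F1.card := by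
    apply Finset.card_le_card_of_injOn (fun x => if s(u, x) ∈ F then s(u, x) else s(v, x))
    · intro x hx
      simp only [Finset.mem_coe] at hx ⊢
      rw [hD, Finset.mem_filter] at hx
      by_cases hc : s(u, x) ∈ F
      · rw [if_pos hc]
        exact Finset.mem_filter.mpr ⟨hc, x, hx.1, Or.inl rfl⟩
      · rw [if_neg hc]
        exact Finset.mem_filter.mpr ⟨hx.2.resolve_left hc, x, hx.1, Or.inr rfl⟩
    · intro x hx y hy hxy
      rw [Finset.mem_coe, hD, Finset.mem_filter] at hx hy
      simp only at hxy
      split_ifs at hxy <;> rw [Sym2.eq_iff] at hxy <;>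
        rcases hxy with ⟨h1, h2⟩ | ⟨h1, h2⟩ <;>
        first
          | exact h2
          | exact absurd h1.symm (hIu x hx.1)
          | exact absurd h1.symm (hIv x hx.1)
          | exact absurd h1 (hIu y hy.1).symm
          | exact absurd h1 (hIv y hy.1).symm
          | exact absurd h1 huv
          | exact absurd h1.symm huv
          | exact absurd h2 (hIv x hx.1)
          | exact absurd h2 (hIu x hx.1)
          | exact (h2 ▸ h1 : x = y) -- fallback
  have hDsub : D ⊆ I := Finset.filter_subset _ _
  have hF1sub : F1 ⊆ F := Finset.filter_subset _ _
  have hJ : (I \ D).card + D.card = I.card := Finset.card_sdiff_add_card_eq_card hDsub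
  have hF2 : (F \ F1).card + F1.card = F.card := Finset.card_sdiff_add_card_eq_card hF1sub
  have hF1le : F1.card ≤ F.card := Finset.card_le_card hF1sub
  set J := I \ D with hJdef
  have hJmem : ∀ x ∈ J, x ∈ I ∧ s(u, x) ∉ F ∧ s(v, x) ∉ F := by
    intro x hx
    rw [hJdef, Finset.mem_sdiff, hD, Finset.mem_filter] at hx
    push_neg at hx
    exact ⟨hx.1, (hx.2 hx.1).1, (hx.2 hx.1).2⟩
  have hJcard : 2 ≤ J.card := by omega
  obtain ⟨x0, hx0⟩ : J.Nonempty := Finset.card_pos.mp (by omega)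
  have hkey : (J.erase x0).card ≤ (F \ F1).card := by
    apply Finset.card_le_card_of_injOn (fun y => s(x0, y))
    · intro y hy
      simp only [Finset.mem_coe] at hy ⊢
      rw [Finset.mem_erase] at hy
      obtain ⟨hx0I, hux0, hvx0⟩ := hJmem x0 hx0
      obtain ⟨hyI, huy, hvy⟩ := hJmem y hy.2
      have hmemF : s(x0, y) ∈ F := hforce x0 hx0I y hyI (Ne.symm hy.1) hux0 hvx0 huy hvy
      rw [Finset.mem_sdiff]
      refine ⟨hmemF, ?_⟩
      rw [hF1, Finset.mem_filter]
      push_neg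
      intro _ z hz
      constructor <;> intro hc <;> rw [Sym2.eq_iff] at hc <;>
        rcases hc with ⟨h1, h2⟩ | ⟨h1, h2⟩
      · exact hIu x0 hx0I h1
      · exact hIu y hyI h2
      · exact hIv x0 hx0I h1
      · exact hIv y hyI h2
    · intro y hy y' hy' hyy'
      rw [Sym2.eq_iff] at hyy'
      rcases hyy' with ⟨_, h2⟩ | ⟨h1, h2⟩
      · exact h2
      · exact absurd h1.symm (Finset.mem_erase.mp hy').1
  have : (J.erase x0).card = J.card - 1 := Finset.card_erase_of_mem hx0
  omega


lemma edited_adj (G : SimpleGraph V) (Ep Em : Finset (Sym2 V)) (a b : V) :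
    (EditedGraph G Ep Em).Adj a b ↔
      ((G.Adj a b ∨ s(a, b) ∈ Ep) ∧ s(a, b) ∉ Em ∧ a ≠ b) := by
  rw [EditedGraph, SimpleGraph.fromEdgeSet_adj]
  simp only [Set.mem_diff, Set.mem_union, SimpleGraph.mem_edgeSet, Finset.mem_coe]
  tauto

/-- in a reduced yes-instance, for every pair `u, v` with
`uv ∈ E+ ∪ E−` for a solution, `|N(u) ∩ N(v)| ≤ 3k`. -/
theorem stmt2 [Fintype V] [DecidableEq V] (G : SimpleGraph V) (k : ℕ)
    (hred : Reduced G k) (hyes : YesInstance G k)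
    (Ep Em : Finset (Sym2 V)) (hsol : IsSolution G k Ep Em)
    (u v : V) (hmem : s(u, v) ∈ Ep ∪ Em) :
    (G.neighborSet u ∩ G.neighborSet v).ncard ≤ 3 * k := by
  classical
  by_contra hbig
  push_neg at hbig
  obtain ⟨hEp, hEm, hk, hDF⟩ := hsol
  set Wset := G.neighborSet u ∩ G.neighborSet v with hWset
  have hfin : Wset.Finite := Set.toFinite _
  set W := hfin.toFinset with hWdef
  have hWmem : ∀ x, x ∈ W ↔ G.Adj u x ∧ G.Adj v x := by
    intro x
    rw [hWdef, Set.Finite.mem_toFinset, hWset]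
    simp [SimpleGraph.mem_neighborSet]
  have hWcard : 3 * k + 1 ≤ W.card := by
    have h := Set.ncard_eq_toFinset_card Wset hfin
    rw [← hWdef] at h
    omega
  set F := (Ep ∪ Em).erase s(u, v) with hF
  have hFcard : F.card + 1 ≤ k := by
    have h1 : F.card = (Ep ∪ Em).card - 1 := Finset.card_erase_of_mem hmem
    have h2 : (Ep ∪ Em).card ≤ Ep.card + Em.card := Finset.card_union_le _ _
    have h3 : 1 ≤ (Ep ∪ Em).card := Finset.card_pos.mpr ⟨_, hmem⟩
    omega
  have hmemF : ∀ e ∈ Ep ∪ Em, e ≠ s(u, v) → e ∈ F := fun e he hne =>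
    Finset.mem_erase.mpr ⟨hne, he⟩
  rcases Finset.mem_union.mp hmem with hEpm | hEmm
  · -- case uv ∈ Ep
    have huvne : u ≠ v := by
      have h := (hEp _ hEpm).2
      rwa [Sym2.mk_isDiag_iff] at h
    have huvnadj : ¬ G.Adj u v := by
      have h := (hEp _ hEpm).1
      rwa [SimpleGraph.mem_edgeSet] at h
    have hnm : ¬ ∃ x y : Fin (k + 1) → V, Function.Injective (Sum.elim x y) ∧
        (∀ i, x i ∈ W ∧ y i ∈ W) ∧ (∀ i, G.Adj (x i) (y i)) := by
      rintro ⟨x, y, h1, h2, h3⟩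
      refine hred.1 u v huvne huvnadj ⟨x, y, h1, fun i => ?_, h3⟩
      have hx := (hWmem (x i)).mp (h2 i).1
      have hy := (hWmem (y i)).mp (h2 i).2
      exact ⟨hx.1, hx.2, hy.1, hy.2⟩
    obtain ⟨I, hIW, hfree, hIcard⟩ := matching_or_free G.Adj k W hnm
    have hImem : ∀ x ∈ I, G.Adj u x ∧ G.Adj v x := fun x hx => (hWmem x).mp (hIW hx)
    refine counting F I u v huvne
      (fun x hx => (hImem x hx).1.ne') (fun x hx => (hImem x hx).2.ne')
      (by omega) ?_
    intro x hx y hy hxy h1 h2 h3 h4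
    obtain ⟨hux, hvx⟩ := hImem x hx
    obtain ⟨huy, hvy⟩ := hImem y hy
    have hnadjxy : ¬ G.Adj x y := hfree x hx y hy hxy
    have hEmsub : ∀ a b : V, s(a, b) ∉ F → s(a, b) ∉ Em := by
      intro a b hnF hc
      refine hnF (hmemF _ (Finset.mem_union_right _ hc) (fun he => ?_))
      exact huvnadj ((SimpleGraph.mem_edgeSet _).mp (he ▸ hEm _ hc))
    have hxyEp : s(x, y) ∈ Ep := by
      by_contra hnot
      refine hDF u v x y ⟨huvne, hux.ne, huy.ne, hvx.ne, hvy.ne, hxy, ?_, ?_, ?_, ?_, ?_, ?_⟩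
      · rw [edited_adj]
        exact ⟨Or.inr hEpm, fun hc => huvnadj ((SimpleGraph.mem_edgeSet _).mp (hEm _ hc)), huvne⟩
      · rw [edited_adj]
        exact ⟨Or.inl hux, hEmsub u x h1, hux.ne⟩
      · rw [edited_adj]
        exact ⟨Or.inl huy, hEmsub u y h3, huy.ne⟩
      · rw [edited_adj]
        exact ⟨Or.inl hvx, hEmsub v x h2, hvx.ne⟩
      · rw [edited_adj]
        exact ⟨Or.inl hvy, hEmsub v y h4, hvy.ne⟩
      · rw [edited_adj]
        rintro ⟨hor, -, -⟩
        rcases hor with hadj | hin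
        · exact hnadjxy hadj
        · exact hnot hin
    refine hmemF _ (Finset.mem_union_left _ hxyEp) ?_
    intro hc
    rw [Sym2.eq_iff] at hc
    rcases hc with ⟨h1', h2'⟩ | ⟨h1', h2'⟩
    · exact hux.ne' h1'
    · exact hvx.ne' h1'
  · -- case uv ∈ Em
    have huvadj : G.Adj u v := (SimpleGraph.mem_edgeSet _).mp (hEm _ hEmm)
    have huvne : u ≠ v := huvadj.ne
    have hnm : ¬ ∃ x y : Fin (k + 1) → V, Function.Injective (Sum.elim x y) ∧
        (∀ i, x i ∈ W ∧ y i ∈ W) ∧ (∀ i, ¬ G.Adj (x i) (y i)) := by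
      rintro ⟨x, y, h1, h2, h3⟩
      refine hred.2 u v huvadj ⟨x, y, h1, fun i => ?_, h3⟩
      have hx := (hWmem (x i)).mp (h2 i).1
      have hy := (hWmem (y i)).mp (h2 i).2
      exact ⟨hx.1, hx.2, hy.1, hy.2⟩
    obtain ⟨I, hIW, hfree, hIcard⟩ := matching_or_free (fun a b => ¬ G.Adj a b) k W hnm
    have hImem : ∀ x ∈ I, G.Adj u x ∧ G.Adj v x := fun x hx => (hWmem x).mp (hIW hx)
    have hclique : ∀ x ∈ I, ∀ y ∈ I, x ≠ y → G.Adj x y := fun x hx y hy hxy =>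
      not_not.mp (hfree x hx y hy hxy)
    refine counting F I u v huvne
      (fun x hx => (hImem x hx).1.ne') (fun x hx => (hImem x hx).2.ne')
      (by omega) ?_
    intro x hx y hy hxy h1 h2 h3 h4
    obtain ⟨hux, hvx⟩ := hImem x hx
    obtain ⟨huy, hvy⟩ := hImem y hy
    have hadjxy : G.Adj x y := hclique x hx y hy hxy
    have hside : ∀ a b : V, s(a, b) ∉ F → s(a, b) ≠ s(u, v) → s(a, b) ∉ Em :=
      fun a b hnF hne hc => hnF (hmemF _ (Finset.mem_union_right _ hc) hne)
    have hneu : ∀ a : V, a ≠ v → s(u, a) ≠ s(u, v) := by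
      intro a ha hc
      rw [Sym2.eq_iff] at hc
      rcases hc with ⟨-, h2'⟩ | ⟨h1', -⟩
      · exact ha h2'
      · exact huvne h1'
    have hnev : ∀ a : V, a ≠ u → s(v, a) ≠ s(u, v) := by
      intro a ha hc
      rw [Sym2.eq_iff] at hc
      rcases hc with ⟨h1', -⟩ | ⟨-, h2'⟩
      · exact huvne h1'.symm
      · exact ha h2'
    have hxyEm : s(x, y) ∈ Em := by
      by_contra hnot
      refine hDF x y u v ⟨hxy, hux.ne', hvx.ne', huy.ne', hvy.ne', huvne, ?_, ?_, ?_, ?_, ?_, ?_⟩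
      · rw [edited_adj]
        exact ⟨Or.inl hadjxy, hnot, hadjxy.ne⟩
      · rw [edited_adj]
        refine ⟨Or.inl hux.symm, ?_, hux.ne'⟩
        rw [Sym2.eq_swap]
        exact hside u x h1 (hneu x hvx.ne')
      · rw [edited_adj]
        refine ⟨Or.inl hvx.symm, ?_, hvx.ne'⟩
        rw [Sym2.eq_swap]
        exact hside v x h2 (hnev x hux.ne')
      · rw [edited_adj]
        refine ⟨Or.inl huy.symm, ?_, huy.ne'⟩
        rw [Sym2.eq_swap]
        exact hside u y h3 (hneu y hvy.ne')
      · rw [edited_adj]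
        refine ⟨Or.inl hvy.symm, ?_, hvy.ne'⟩
        rw [Sym2.eq_swap]
        exact hside v y h4 (hnev y huy.ne')
      · rw [edited_adj]
        rintro ⟨-, hnEm, -⟩
        exact hnEm hEmm
    refine hmemF _ (Finset.mem_union_right _ hxyEm) ?_
    intro hc
    rw [Sym2.eq_iff] at hc
    rcases hc with ⟨h1', h2'⟩ | ⟨h1', h2'⟩
    · exact hux.ne' h1'
    · exact hvx.ne' h1'
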